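/- Let A be a commutative ℚ-algebra with a derivation δ, extend δ coefficientwise to a derivation on A[[t]] (still denoted δ), and let ev : A[[t]] → A be evaluation at 0. Then the Taylor map T^{ev}_{δ + d/dt} : A[[t]] → A[[t]], f ↦ Σ_{k≥0} ev((δ + d/dt)^k(f))/k! · t^k, is a ring isomorphism whose compositional inverse is T^{ev}_{−δ + d/dt}. -/

import Mathlib

/-- The coefficientwise extension of a map `δ : A → A` to `A[[t]]`. -/
noncomputable def coeffwiseDer {A : Type*} [CommRing A] (δ : A → A) :
    PowerSeries A → PowerSeries A :=
  fun f => PowerSeries.mk fun n => δ (PowerSeries.coeff n f)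

/-- The Taylor map `T^{ev}_D(f) = Σ_k ev(D^k f)/k! · t^k` of the evaluation map
`ev : A[[t]] → A` at `0`, for a map `D` on `A[[t]]`. -/
noncomputable def taylorEv {A : Type*} [CommRing A] [Algebra ℚ A]
    (D : PowerSeries A → PowerSeries A) : PowerSeries A → PowerSeries A :=
  fun f => PowerSeries.mk fun k =>
    (k.factorial : ℚ)⁻¹ • PowerSeries.constantCoeff (D^[k] f)

section Aux

open PowerSeries

variable {A : Type*} [CommRing A] [Algebra ℚ A]

private noncomputable def Dop (δ : Derivation ℤ A A) : PowerSeries A → PowerSeries A :=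
  fun f => coeffwiseDer (⇑δ) f + PowerSeries.derivativeFun f

lemma coeff_derivativeFun' (f : PowerSeries A) (n : ℕ) :
    coeff n (derivativeFun f) = coeff (n + 1) f * (n + 1) := coeff_derivative f n

lemma coeff_coeffwiseDer (d : A → A) (f : PowerSeries A) (n : ℕ) :
    coeff n (coeffwiseDer d f) = d (coeff n f) := coeff_mk _ _

lemma coeff_taylorEv (D : PowerSeries A → PowerSeries A) (f : PowerSeries A) (k : ℕ) :
    coeff k (taylorEv D f) =
      (k.factorial : ℚ)⁻¹ • constantCoeff (D^[k] f) := coeff_mk _ _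

lemma cw_add (δ : Derivation ℤ A A) (f g : PowerSeries A) :
    coeffwiseDer (⇑δ) (f + g) = coeffwiseDer (⇑δ) f + coeffwiseDer (⇑δ) g := by
  ext n
  simp [coeff_coeffwiseDer]

lemma Dop_add (δ : Derivation ℤ A A) (f g : PowerSeries A) :
    Dop δ (f + g) = Dop δ f + Dop δ g := by
  simp only [Dop, cw_add, derivativeFun_add]; ring

lemma Dop_iter_add (δ : Derivation ℤ A A) (k : ℕ) (f g : PowerSeries A) :
    (Dop δ)^[k] (f + g) = (Dop δ)^[k] f + (Dop δ)^[k] g := by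
  induction k generalizing f g with
  | zero => rfl
  | succ k ih => simp [Function.iterate_succ_apply, Dop_add, ih]

lemma taylor_add (δ : Derivation ℤ A A) (f g : PowerSeries A) :
    taylorEv (Dop δ) (f + g) = taylorEv (Dop δ) f + taylorEv (Dop δ) g := by
  ext k
  simp [coeff_taylorEv, Dop_iter_add, smul_add]

lemma taylor_ev (D : PowerSeries A → PowerSeries A) (f : PowerSeries A) :
    constantCoeff (taylorEv D f) = constantCoeff f := by
  have := coeff_taylorEv D f 0
  simpa [coeff_zero_eq_constantCoeff] using this

lemma cw_mul (δ : Derivation ℤ A A) (f g : PowerSeries A) :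
    coeffwiseDer (⇑δ) (f * g) =
      coeffwiseDer (⇑δ) f * g + f * coeffwiseDer (⇑δ) g := by
  ext n
  simp only [coeff_coeffwiseDer, map_add, coeff_mul, map_sum]
  rw [← Finset.sum_add_distrib]
  refine Finset.sum_congr rfl fun p _ => ?_
  rw [Derivation.leibniz]
  simp only [coeff_coeffwiseDer, smul_eq_mul]
  ring

lemma Dop_mul (δ : Derivation ℤ A A) (f g : PowerSeries A) :
    Dop δ (f * g) = Dop δ f * g + f * Dop δ g := by
  simp only [Dop, derivativeFun_mul, cw_mul, smul_eq_mul]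
  ring

lemma taylor_deriv (D : PowerSeries A → PowerSeries A) (f : PowerSeries A) :
    derivativeFun (taylorEv D f) = taylorEv D (D f) := by
  ext n
  rw [coeff_derivativeFun', coeff_taylorEv, coeff_taylorEv, ← Function.iterate_succ_apply]
  set x := constantCoeff (D^[n + 1] f)
  have h1 : x * ((n : A) + 1) = ((n + 1 : ℕ) : ℚ) • x := by
    rw [Algebra.smul_def, map_natCast]
    push_cast
    ring
  rw [smul_mul_assoc, h1, smul_smul]
  congr 1
  rw [Nat.factorial_succ]
  push_cast
  have h2 : (n.factorial : ℚ) ≠ 0 := by exact_mod_cast n.factorial_ne_zero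
  field_simp

lemma taylor_one (δ : Derivation ℤ A A) : taylorEv (Dop δ) 1 = 1 := by
  have h0 : Dop δ 0 = 0 := by
    ext n
    simp [Dop, coeff_coeffwiseDer, coeff_derivativeFun']
  have h1 : Dop δ 1 = 0 := by
    ext n
    simp only [Dop, map_add, coeff_coeffwiseDer, coeff_derivativeFun', coeff_one]
    rcases n with _ | n <;> simp
  ext n
  rcases n with _ | n
  · simp [coeff_zero_eq_constantCoeff, taylor_ev]
  · rw [coeff_taylorEv, Function.iterate_succ_apply, h1, Function.iterate_fixed h0]
    simp [coeff_one]

lemma taylor_mul (δ : Derivation ℤ A A) (f g : PowerSeries A) :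
    taylorEv (Dop δ) (f * g) = taylorEv (Dop δ) f * taylorEv (Dop δ) g := by
  ext n
  induction n generalizing f g with
  | zero =>
    simp [coeff_zero_eq_constantCoeff, taylor_ev]
  | succ n ih =>
    have key : coeff n (derivativeFun (taylorEv (Dop δ) (f * g))) =
        coeff n (derivativeFun (taylorEv (Dop δ) f * taylorEv (Dop δ) g)) := by
      rw [taylor_deriv, derivativeFun_mul, Dop_mul, taylor_add, taylor_deriv, taylor_deriv]
      simp only [map_add, smul_eq_mul]
      rw [ih (Dop δ f) g, ih f (Dop δ g)]
      ring
    rw [coeff_derivativeFun', coeff_derivativeFun'] at key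
    have hc : ((n : ℚ) + 1) ≠ 0 := by positivity
    apply smul_right_injective A hc
    have hsm : ∀ y : A, ((n : ℚ) + 1) • y = y * ((n : A) + 1) := by
      intro y
      rw [Algebra.smul_def, map_add, map_natCast, map_one]
      ring
    show ((n : ℚ) + 1) • _ = ((n : ℚ) + 1) • _
    rw [hsm, hsm]
    exact key

lemma cw_deriv_comm (δ : Derivation ℤ A A) (f : PowerSeries A) :
    coeffwiseDer (⇑δ) (derivativeFun f) = derivativeFun (coeffwiseDer (⇑δ) f) := by
  ext n
  rw [coeff_coeffwiseDer, coeff_derivativeFun', coeff_derivativeFun', coeff_coeffwiseDer]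
  have : ((n : A) + 1) = ((n + 1 : ℕ) : A) := by push_cast; ring
  rw [this, Derivation.leibniz, Derivation.map_natCast]
  simp [mul_comm]

lemma cw_Dop_comm (δ : Derivation ℤ A A) (f : PowerSeries A) :
    coeffwiseDer (⇑δ) (Dop δ f) = Dop δ (coeffwiseDer (⇑δ) f) := by
  simp only [Dop, cw_add, cw_deriv_comm]

lemma cw_Dop_iter_comm (δ : Derivation ℤ A A) (k : ℕ) (f : PowerSeries A) :
    coeffwiseDer (⇑δ) ((Dop δ)^[k] f) = (Dop δ)^[k] (coeffwiseDer (⇑δ) f) := by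
  induction k generalizing f with
  | zero => rfl
  | succ k ih => rw [Function.iterate_succ_apply, Function.iterate_succ_apply, ih, cw_Dop_comm]

lemma ev_cw (δ : Derivation ℤ A A) (f : PowerSeries A) :
    constantCoeff (coeffwiseDer (⇑δ) f) = δ (constantCoeff f) := by
  simp [← coeff_zero_eq_constantCoeff, coeff_coeffwiseDer]

lemma cw_taylor (δ : Derivation ℤ A A) (f : PowerSeries A) :
    coeffwiseDer (⇑δ) (taylorEv (Dop δ) f) = taylorEv (Dop δ) (coeffwiseDer (⇑δ) f) := by
  ext k
  rw [coeff_coeffwiseDer, coeff_taylorEv, coeff_taylorEv, map_rat_smul, ← ev_cw,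
    cw_Dop_iter_comm]

lemma cw_neg (δ : Derivation ℤ A A) (f : PowerSeries A) :
    coeffwiseDer (⇑(-δ)) f = - coeffwiseDer (⇑δ) f := by
  ext n
  simp [coeff_coeffwiseDer]

lemma E_taylor (δ : Derivation ℤ A A) (f : PowerSeries A) :
    Dop (-δ) (taylorEv (Dop δ) f) = taylorEv (Dop δ) (derivativeFun f) := by
  have : Dop (-δ) (taylorEv (Dop δ) f) =
      - coeffwiseDer (⇑δ) (taylorEv (Dop δ) f) + derivativeFun (taylorEv (Dop δ) f) := by
    rw [Dop, cw_neg]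
  rw [this, cw_taylor, taylor_deriv]
  have : Dop δ f = coeffwiseDer (⇑δ) f + derivativeFun f := rfl
  rw [this, taylor_add]
  ring

lemma E_iter_taylor (δ : Derivation ℤ A A) (n : ℕ) (f : PowerSeries A) :
    (Dop (-δ))^[n] (taylorEv (Dop δ) f) = taylorEv (Dop δ) (derivativeFun^[n] f) := by
  induction n generalizing f with
  | zero => rfl
  | succ n ih =>
    rw [Function.iterate_succ_apply' PowerSeries.derivativeFun n f,
      Function.iterate_succ_apply', ih, E_taylor]

lemma ev_iter_deriv (n : ℕ) (f : PowerSeries A) :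
    constantCoeff (derivativeFun^[n] f) = n.factorial • coeff n f := by
  induction n generalizing f with
  | zero => simp [coeff_zero_eq_constantCoeff]
  | succ n ih =>
    rw [Function.iterate_succ_apply, ih, coeff_derivativeFun']
    rw [show ((n : A) + 1) = ((n + 1 : ℕ) : A) by push_cast; ring]
    rw [mul_comm, ← nsmul_eq_mul, smul_smul]
    congr 1
    rw [Nat.factorial_succ]
    ring

lemma comp_inv (δ : Derivation ℤ A A) (f : PowerSeries A) :
    taylorEv (Dop (-δ)) (taylorEv (Dop δ) f) = f := by
  ext n
  rw [coeff_taylorEv, E_iter_taylor, taylor_ev, ev_iter_deriv]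
  rw [← Nat.cast_smul_eq_nsmul ℚ, smul_smul, inv_mul_cancel₀, one_smul]
  exact_mod_cast n.factorial_ne_zero

end Aux

/-- `T^{ev}_{δ + d/dt}` is a ring isomorphism of `A[[t]]` with compositional inverse
`T^{ev}_{−δ + d/dt}`. -/
theorem taylorEv_ring_iso {A : Type*} [CommRing A] [Algebra ℚ A]
    (δ : Derivation ℤ A A) :
    (∀ f g : PowerSeries A,
      taylorEv (fun f => coeffwiseDer (⇑δ) f + PowerSeries.derivativeFun f) (f + g) =
        taylorEv (fun f => coeffwiseDer (⇑δ) f + PowerSeries.derivativeFun f) f +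
          taylorEv (fun f => coeffwiseDer (⇑δ) f + PowerSeries.derivativeFun f) g) ∧
    (∀ f g : PowerSeries A,
      taylorEv (fun f => coeffwiseDer (⇑δ) f + PowerSeries.derivativeFun f) (f * g) =
        taylorEv (fun f => coeffwiseDer (⇑δ) f + PowerSeries.derivativeFun f) f *
          taylorEv (fun f => coeffwiseDer (⇑δ) f + PowerSeries.derivativeFun f) g) ∧
    (taylorEv (fun f => coeffwiseDer (⇑δ) f + PowerSeries.derivativeFun f) 1 = 1) ∧
    (taylorEv (fun f => coeffwiseDer (fun a => -δ a) f + PowerSeries.derivativeFun f) ∘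
        taylorEv (fun f => coeffwiseDer (⇑δ) f + PowerSeries.derivativeFun f) = id) ∧
    (taylorEv (fun f => coeffwiseDer (⇑δ) f + PowerSeries.derivativeFun f) ∘
        taylorEv (fun f => coeffwiseDer (fun a => -δ a) f + PowerSeries.derivativeFun f)
      = id) := by
  have hneg : (fun a => -δ a) = ⇑(-δ) := by ext a; simp
  have hD : (fun f => coeffwiseDer (⇑δ) f + PowerSeries.derivativeFun f) = Dop δ := rfl
  have hE : (fun f => coeffwiseDer (fun a => -δ a) f + PowerSeries.derivativeFun f)
      = Dop (-δ) := by rw [hneg]; rfl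
  refine ⟨?_, ?_, ?_, ?_, ?_⟩
  · rw [hD]; exact taylor_add δ
  · rw [hD]; exact taylor_mul δ
  · rw [hD]; exact taylor_one δ
  · rw [hD, hE]; funext f; exact comp_inv δ f
  · rw [hD, hE]
    have := fun f => comp_inv (-δ) f
    rw [neg_neg] at this
    funext f; exact this f
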